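/- Let δ_0 ≥ δ_1 ≥ δ_2 ≥ ⋯ be a decreasing sequence of positive real numbers and let S ⊆ ℝ be a finite nonempty set. Then there exists a nonempty subset R ⊆ S with |R| = r such that every z ∈ S satisfies dist(z, R) ≤ δ_r, and every pair of distinct points x, y ∈ R satisfies |x − y| ≥ δ_{r−1}. -/
import Mathlib

lemma statement19_aux (δ : ℕ → ℝ) (hpos : ∀ m, 0 < δ m) (hmono : Antitone δ)
    (S : Finset ℝ) :
    ∀ n (R : Finset ℝ), R ⊆ S → R.Nonempty → S.card - R.card ≤ n →
      (∀ w ∈ R, ∀ w' ∈ R, w ≠ w' → δ (R.card - 1) ≤ |w - w'|) →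
    ∃ R' : Finset ℝ, R' ⊆ S ∧ R'.Nonempty ∧
      (∀ z ∈ S, ∃ w ∈ R', |z - w| ≤ δ R'.card) ∧
      (∀ w ∈ R', ∀ w' ∈ R', w ≠ w' → δ (R'.card - 1) ≤ |w - w'|) := by
  intro n
  induction n with
  | zero =>
    intro R hRS hRne hcard hsep
    have hle : S.card ≤ R.card := by omega
    have hEq : R = S := Finset.eq_of_subset_of_card_le hRS hle
    refine ⟨R, hRS, hRne, ?_, hsep⟩
    intro z hz
    refine ⟨z, by rw [hEq]; exact hz, by simp [le_of_lt (hpos _)]⟩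
  | succ n ih =>
    intro R hRS hRne hcard hsep
    by_cases hcov : ∀ z ∈ S, ∃ w ∈ R, |z - w| ≤ δ R.card
    · exact ⟨R, hRS, hRne, hcov, hsep⟩
    · push_neg at hcov
      obtain ⟨z, hzS, hz⟩ := hcov
      have hzR : z ∉ R := by
        intro h
        have := hz z h
        simp at this
        exact absurd this (not_lt.mpr (le_of_lt (hpos _)))
      set R' := insert z R with hR'
      have hcard' : R'.card = R.card + 1 := Finset.card_insert_of_notMem hzR
      have hsub : R' ⊆ S := Finset.insert_subset hzS hRS
      have hsep' : ∀ w ∈ R', ∀ w' ∈ R', w ≠ w' → δ (R'.card - 1) ≤ |w - w'| := by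
        intro w hw w' hw' hne
        rw [hcard']
        simp only [Nat.add_sub_cancel]
        rcases Finset.mem_insert.mp hw with rfl | hwR <;>
          rcases Finset.mem_insert.mp hw' with rfl | hwR'
        · exact absurd rfl hne
        · exact le_of_lt (hz w' hwR')
        · exact le_of_lt (by rw [abs_sub_comm]; exact hz w hwR)
        · exact le_trans (hmono (Nat.sub_le _ _)) (hsep w hwR w' hwR' hne)
      have hcard'' : S.card - R'.card ≤ n := by
        rw [hcard']; omega
      exact ih R' hsub (Finset.insert_nonempty _ _) hcard'' hsep'

theorem statement19 (δ : ℕ → ℝ) (hpos : ∀ m, 0 < δ m) (hmono : Antitone δ)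
    (S : Finset ℝ) (hS : S.Nonempty) :
    ∃ R : Finset ℝ, R ⊆ S ∧ R.Nonempty ∧
      (∀ z ∈ S, ∃ w ∈ R, |z - w| ≤ δ R.card) ∧
      (∀ w ∈ R, ∀ w' ∈ R, w ≠ w' → δ (R.card - 1) ≤ |w - w'|) := by
  obtain ⟨x, hx⟩ := hS
  exact statement19_aux δ hpos hmono S (S.card) {x}
    (Finset.singleton_subset_iff.mpr hx) (Finset.singleton_nonempty x)
    (Nat.sub_le _ _) (by simp)
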